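/- Let Ω ⊆ ℂⁿ be open, Φ : Ω → ℝ twice continuously real-differentiable, x₀ ∈ Ω, and let Ψ be holomorphic on a neighborhood of (x₀, conj x₀) in ℂⁿ × ℂⁿ with Ψ(x, conj x) = Φ(x) for x near x₀. Then for every ξ ∈ ℂⁿ, D²Ψ(x₀, conj x₀)((ξ,0),(0, conj ξ)) = L_Φ(x₀)(ξ), where D²Ψ is the second complex Fréchet derivative and L_Φ is the Levi form. Consequently, if L_Φ(x₀) is positive definite, then the ℂ-bilinear form (ξ,η) ↦ D²Ψ(x₀, conj x₀)((ξ,0),(0,η)) on ℂⁿ × ℂⁿ is nondegenerate, i.e. the mixed Hessian Ψ''_{xy}(x₀, conj x₀), viewed as a ℂ-linear map ℂⁿ → ℂⁿ, is invertible. -/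

import Mathlib

open Complex

noncomputable section

open Metric MeasureTheory

/-- Cauchy estimate: a function holomorphic on a closed ball with values bounded by `M`
has `‖fderiv‖ ≤ M / s` at the center. -/
lemma norm_fderiv_le_of_bound {E F : Type*} [NormedAddCommGroup E] [NormedSpace ℂ E]
    [NormedAddCommGroup F] [NormedSpace ℂ F] [CompleteSpace F]
    {f : E → F} {x : E} {s M : ℝ} (hs : 0 < s) (hM : 0 ≤ M)
    (hf : ∀ z ∈ closedBall x s, DifferentiableAt ℂ f z)
    (hbound : ∀ z ∈ closedBall x s, ‖f z‖ ≤ M) :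
    ‖fderiv ℂ f x‖ ≤ M / s := by
  apply ContinuousLinearMap.opNorm_le_bound _ (div_nonneg hM hs.le)
  intro u
  rcases eq_or_ne u 0 with rfl | hu
  · simp
  have hun : (0:ℝ) < ‖u‖ := norm_pos_iff.2 hu
  set ρ : NNReal := ⟨s / ‖u‖, div_nonneg hs.le hun.le⟩ with hρdef
  have hρpos : 0 < ρ := by
    rw [← NNReal.coe_lt_coe]
    exact div_pos hs hun
  have hmem : ∀ z : ℂ, z ∈ closedBall (0:ℂ) (ρ:ℝ) → x + z • u ∈ closedBall x s := by
    intro z hz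
    rw [mem_closedBall, dist_eq_norm] at hz ⊢
    have : ‖x + z • u - x‖ = ‖z‖ * ‖u‖ := by
      simp [norm_smul]
    rw [this]
    calc ‖z‖ * ‖u‖ ≤ (s / ‖u‖) * ‖u‖ := by
          apply mul_le_mul_of_nonneg_right _ (norm_nonneg u)
          exact (by simpa using hz : ‖z‖ ≤ (ρ:ℝ))
      _ = s := div_mul_cancel₀ s hun.ne'
  have haff : ∀ z : ℂ, DifferentiableAt ℂ (fun w : ℂ => x + w • u) z := fun z =>
    (differentiableAt_id.smul_const u).const_add x
  have hg : DifferentiableOn ℂ (fun z : ℂ => f (x + z • u)) (closedBall 0 (ρ:ℝ)) := fun z hz =>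
    ((hf _ (hmem z hz)).comp z (haff z)).differentiableWithinAt
  have hps := hg.hasFPowerSeriesOnBall hρpos
  have hderiv : HasDerivAt (fun z : ℂ => f (x + z • u)) (fderiv ℂ f x u) 0 := by
    have h0 : HasDerivAt (fun w : ℂ => x + w • u) u 0 := by
      simpa using ((hasDerivAt_id (0 : ℂ)).smul_const u).const_add x
    have hfx : HasFDerivAt f (fderiv ℂ f x) (x + (0:ℂ) • u) := by
      simpa using (hf x (mem_closedBall_self hs.le)).hasFDerivAt
    exact hfx.comp_hasDerivAt 0 h0
  have key : fderiv ℂ f x u = cauchyPowerSeries (fun z : ℂ => f (x + z • u)) 0 ρ 1 (fun _ => 1) := by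
    rw [← hderiv.deriv]
    exact hps.hasFPowerSeriesAt.deriv
  rw [key]
  set g : ℂ → F := fun z : ℂ => f (x + z • u) with hgdef
  have hmemθ : ∀ θ : ℝ, circleMap 0 (ρ:ℝ) θ ∈ closedBall (0:ℂ) (ρ:ℝ) := fun θ =>
    circleMap_mem_closedBall 0 ρ.2 θ
  have hcont : Continuous fun θ : ℝ => ‖g (circleMap 0 (ρ:ℝ) θ)‖ := by
    have hγ : Continuous fun θ : ℝ => x + circleMap 0 (ρ:ℝ) θ • u :=
      continuous_const.add ((continuous_circleMap 0 (ρ:ℝ)).smul continuous_const)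
    refine Continuous.norm ?_
    rw [continuous_iff_continuousAt]
    intro θ
    exact ContinuousAt.comp ((hf _ (hmem _ (hmemθ θ))).continuousAt) hγ.continuousAt
  have hle : ∀ θ ∈ Set.Icc (0:ℝ) (2 * Real.pi), ‖g (circleMap 0 (ρ:ℝ) θ)‖ ≤ M := fun θ _ =>
    hbound _ (hmem _ (hmemθ θ))
  have hint : (∫ θ in (0:ℝ)..2 * Real.pi, ‖g (circleMap 0 (ρ:ℝ) θ)‖) ≤ 2 * Real.pi * M := by
    calc (∫ θ in (0:ℝ)..2 * Real.pi, ‖g (circleMap 0 (ρ:ℝ) θ)‖)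
        ≤ ∫ _ in (0:ℝ)..2 * Real.pi, M := by
          apply intervalIntegral.integral_mono_on Real.two_pi_pos.le
            (hcont.intervalIntegrable _ _) intervalIntegrable_const hle
      _ = 2 * Real.pi * M := by
          rw [intervalIntegral.integral_const]
          simp [mul_comm]
  have h1 : ‖cauchyPowerSeries g 0 (ρ:ℝ) 1 (fun _ => 1)‖ ≤ ‖cauchyPowerSeries g 0 (ρ:ℝ) 1‖ := by
    simpa using (cauchyPowerSeries g 0 (ρ:ℝ) 1).le_opNorm (fun _ => (1:ℂ))
  have h2 := norm_cauchyPowerSeries_le g 0 (ρ:ℝ) 1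
  have hρr : |(ρ:ℝ)| = s / ‖u‖ := abs_of_nonneg ρ.2
  have hInonneg : (0:ℝ) ≤ (2 * Real.pi)⁻¹ := by positivity
  calc ‖cauchyPowerSeries g 0 (ρ:ℝ) 1 (fun _ => 1)‖
      ≤ ‖cauchyPowerSeries g 0 (ρ:ℝ) 1‖ := h1
    _ ≤ ((2 * Real.pi)⁻¹ * ∫ θ in (0:ℝ)..2 * Real.pi, ‖g (circleMap 0 (ρ:ℝ) θ)‖) *
          |(ρ:ℝ)|⁻¹ ^ 1 := h2
    _ ≤ ((2 * Real.pi)⁻¹ * (2 * Real.pi * M)) * (s / ‖u‖)⁻¹ ^ 1 := by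
        rw [hρr]
        gcongr
    _ = M / s * ‖u‖ := by
        rw [pow_one]
        field_simp
lemma differentiableAt_fderiv_apply {E : Type*} [NormedAddCommGroup E] [NormedSpace ℂ E]
    [FiniteDimensional ℂ E]
    {f : E → ℂ} {U : Set E} (hU : IsOpen U) (hf : DifferentiableOn ℂ f U)
    {p : E} (hp : p ∈ U) (u : E) :
    DifferentiableAt ℂ (fun y => fderiv ℂ f y u) p := by
  haveI : ProperSpace E := FiniteDimensional.proper ℂ E
  -- a closed ball inside U
  obtain ⟨δ, hδpos, hδ⟩ : ∃ δ > 0, closedBall p δ ⊆ U :=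
    (Metric.nhds_basis_closedBall.mem_iff.1 (hU.mem_nhds hp)).imp fun δ h => ⟨h.1, h.2⟩
  -- a bound for ‖f‖ on the closed ball
  obtain ⟨M₀, hM₀⟩ := (isCompact_closedBall p δ).exists_bound_of_continuousOn
    (hf.continuousOn.mono hδ)
  set M : ℝ := max M₀ 0 with hMdef
  have hM : ∀ z ∈ closedBall p δ, ‖f z‖ ≤ M := fun z hz => (hM₀ z hz).trans (le_max_left _ _)
  have hMnonneg : (0:ℝ) ≤ M := le_max_right _ _
  -- radii
  set ε : ℝ := δ / 4 with hεdef
  have hεpos : 0 < ε := by positivity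
  set r : NNReal := ⟨δ / (4 * (‖u‖ + 1)), by positivity⟩ with hrdef
  have hrpos : 0 < r := by
    rw [← NNReal.coe_lt_coe]
    show (0:ℝ) < δ / (4 * (‖u‖ + 1))
    positivity
  have hrpos' : (0:ℝ) < (r:ℝ) := hrpos
  have hru : (r:ℝ) * ‖u‖ ≤ δ / 4 := by
    show δ / (4 * (‖u‖ + 1)) * ‖u‖ ≤ δ / 4
    rw [div_mul_eq_mul_div, div_le_div_iff₀ (by positivity) (by positivity)]
    nlinarith [norm_nonneg u, hδpos]
  -- membership facts
  have hmem1 : ∀ y ∈ ball p ε, ∀ z ∈ closedBall (0:ℂ) (r:ℝ), y + z • u ∈ closedBall p (δ/2) := by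
    intro y hy z hz
    rw [mem_closedBall, dist_eq_norm]
    have : y + z • u - p = (y - p) + z • u := by abel
    rw [this]
    calc ‖(y - p) + z • u‖ ≤ ‖y - p‖ + ‖z • u‖ := norm_add_le _ _
      _ ≤ ε + (r:ℝ) * ‖u‖ := by
          gcongr
          · exact (mem_ball_iff_norm.1 hy).le
          · rw [norm_smul]
            exact mul_le_mul_of_nonneg_right (by simpa [dist_eq_norm] using hz) (norm_nonneg u)
      _ ≤ δ/4 + δ/4 := by gcongr <;> simp [hεdef, hru]
      _ = δ/2 := by ring
  have hmem2 : ∀ x' ∈ closedBall p (δ/2), closedBall x' (δ/2) ⊆ closedBall p δ := by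
    intro x' hx' z hz
    rw [mem_closedBall] at *
    calc dist z p ≤ dist z x' + dist x' p := dist_triangle _ _ _
      _ ≤ δ/2 + δ/2 := add_le_add hz hx'
      _ = δ := by ring
  have hdiffAt : ∀ z ∈ closedBall p δ, DifferentiableAt ℂ f z := fun z hz =>
    hf.differentiableAt (hU.mem_nhds (hδ hz))
  -- bound for the derivative on the middle ball
  have hfderiv_bound : ∀ x' ∈ closedBall p (δ/2), ‖fderiv ℂ f x'‖ ≤ M / (δ/2) := by
    intro x' hx'
    exact norm_fderiv_le_of_bound (by positivity) hMnonneg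
      (fun z hz => hdiffAt z (hmem2 x' hx' hz)) (fun z hz => hM z (hmem2 x' hx' hz))
  -- kernel of the Cauchy integral
  set γ : ℝ → ℂ := fun θ => circleMap 0 (r:ℝ) θ with hγdef
  have hγne : ∀ θ, γ θ ≠ 0 := fun θ => circleMap_ne_center hrpos'.ne'
  set a : ℝ → ℂ := fun θ => deriv (circleMap 0 (r:ℝ)) θ * ((γ θ)⁻¹ * (γ θ)⁻¹) with hadef
  set F : E → ℝ → ℂ := fun y θ => a θ * f (y + γ θ • u) with hFdef
  set F' : E → ℝ → E →L[ℂ] ℂ := fun y θ => a θ • fderiv ℂ f (y + γ θ • u) with hF'def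
  set μ : Measure ℝ := volume.restrict (Set.Ioc 0 (2 * Real.pi)) with hμdef
  haveI : IsFiniteMeasure μ := by
    constructor
    rw [hμdef, Measure.restrict_apply_univ, Real.volume_Ioc]
    exact ENNReal.ofReal_lt_top
  have hγcont : Continuous γ := continuous_circleMap 0 (r:ℝ)
  have hacont : Continuous a := by
    have h1 : Continuous (deriv (circleMap 0 (r:ℝ))) := by
      show Continuous fun θ => deriv (circleMap 0 (r:ℝ)) θ
      simp only [deriv_circleMap]
      exact hγcont.mul continuous_const
    exact h1.mul ((hγcont.inv₀ hγne).mul (hγcont.inv₀ hγne))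
  have hγmem : ∀ θ, γ θ ∈ closedBall (0:ℂ) (r:ℝ) := fun θ =>
    circleMap_mem_closedBall 0 hrpos'.le θ
  have hhalf : closedBall p (δ/2) ⊆ closedBall p δ := closedBall_subset_closedBall (by linarith)
  have hFcont : ∀ y ∈ ball p ε, Continuous (F y) := by
    intro y hy
    apply hacont.mul
    have hinner : Continuous fun θ => y + γ θ • u :=
      continuous_const.add (hγcont.smul continuous_const)
    rw [continuous_iff_continuousAt]
    intro θ
    exact ContinuousAt.comp
      (hdiffAt _ (hhalf (hmem1 y hy _ (hγmem θ)))).continuousAt hinner.continuousAt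
  have hF_meas : ∀ᶠ y in nhds p, AEStronglyMeasurable (F y) μ := by
    filter_upwards [ball_mem_nhds p hεpos] with y hy using (hFcont y hy).aestronglyMeasurable
  have hF_int : Integrable (F p) μ :=
    ((hFcont p (mem_ball_self hεpos)).integrableOn_Ioc)
  haveI : SecondCountableTopology (E →L[ℂ] ℂ) := by
    haveI : ProperSpace (E →L[ℂ] ℂ) := FiniteDimensional.proper ℂ _
    infer_instance
  borelize E
  have hmeas1 : Measurable fun θ => fderiv ℂ f (p + γ θ • u) :=
    (measurable_fderiv ℂ f).comp
      (continuous_const.add (hγcont.smul continuous_const)).measurable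
  have hF'_meas : AEStronglyMeasurable (F' p) μ :=
    hacont.aestronglyMeasurable.smul hmeas1.aestronglyMeasurable
  have hnorm_γ : ∀ θ, ‖γ θ‖ = (r:ℝ) := fun θ => by
    simp [hγdef, norm_circleMap_zero, abs_of_pos hrpos']
  have hnorm_a : ∀ θ, ‖a θ‖ = (r:ℝ)⁻¹ := by
    intro θ
    rw [hadef]
    simp only [deriv_circleMap, norm_mul, norm_inv, norm_I]
    rw [show circleMap 0 (r:ℝ) θ = γ θ from rfl, hnorm_γ]
    field_simp
  have h_bound : ∀ᵐ θ ∂μ, ∀ y ∈ ball p ε, ‖F' y θ‖ ≤ (r:ℝ)⁻¹ * (M / (δ/2)) := by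
    refine Filter.Eventually.of_forall fun θ y hy => ?_
    calc ‖F' y θ‖ = ‖a θ‖ * ‖fderiv ℂ f (y + γ θ • u)‖ := by
          show ‖a θ • fderiv ℂ f (y + γ θ • u)‖ = _
          rw [norm_smul]
      _ ≤ (r:ℝ)⁻¹ * (M / (δ/2)) := by
          rw [hnorm_a]
          gcongr
          exact hfderiv_bound _ (hmem1 y hy _ (hγmem θ))
  have bound_int : Integrable (fun _ : ℝ => (r:ℝ)⁻¹ * (M / (δ/2))) μ := integrable_const _
  have h_diff : ∀ᵐ θ ∂μ, ∀ y ∈ ball p ε, HasFDerivAt (F · θ) (F' y θ) y := by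
    refine Filter.Eventually.of_forall fun θ y hy => ?_
    have hx' : y + γ θ • u ∈ U := hδ (hhalf (hmem1 y hy _ (hγmem θ)))
    have h1 : HasFDerivAt (fun y' : E => y' + γ θ • u) (ContinuousLinearMap.id ℂ E) y :=
      (hasFDerivAt_id y).add_const _
    have h2 : HasFDerivAt f (fderiv ℂ f (y + γ θ • u)) (y + γ θ • u) :=
      (hf.differentiableAt (hU.mem_nhds hx')).hasFDerivAt
    have h3 := h2.comp y h1
    rw [ContinuousLinearMap.comp_id] at h3
    simpa [hFdef, hF'def] using h3.const_mul (a θ)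
  have key := hasFDerivAt_integral_of_dominated_of_fderiv_le (ball_mem_nhds p hεpos) hF_meas hF_int hF'_meas
    h_bound bound_int h_diff
  have hrep : ∀ y ∈ ball p ε,
      fderiv ℂ f y u = (2 * Real.pi * I : ℂ)⁻¹ • ∫ θ, F y θ ∂μ := by
    intro y hy
    set g : ℂ → ℂ := fun z => f (y + z • u) with hg
    have hgd : DifferentiableOn ℂ g (closedBall 0 (r:ℝ)) := fun z hz =>
      ((hdiffAt _ (hhalf (hmem1 y hy z hz))).comp z
        ((differentiableAt_id.smul_const u).const_add y)).differentiableWithinAt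
    have hps := hgd.hasFPowerSeriesOnBall hrpos
    have hderiv : HasDerivAt g (fderiv ℂ f y u) 0 := by
      have h0 : HasDerivAt (fun w : ℂ => y + w • u) u 0 := by
        simpa using ((hasDerivAt_id (0 : ℂ)).smul_const u).const_add y
      have hfy : HasFDerivAt f (fderiv ℂ f y) (y + (0:ℂ) • u) := by
        simpa using (hf.differentiableAt (hU.mem_nhds (hδ
          (hhalf (hmem1 y hy 0 (mem_closedBall_self hrpos'.le)))))).hasFDerivAt
      exact hfy.comp_hasDerivAt 0 h0
    have e1 : fderiv ℂ f y u = cauchyPowerSeries g 0 (r:ℝ) 1 (fun _ => 1) := by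
      rw [← hderiv.deriv]
      exact hps.hasFPowerSeriesAt.deriv
    rw [e1, cauchyPowerSeries_apply]
    congr 1
    rw [show (∮ z in C(0, (r:ℝ)), ((1:ℂ) / (z - 0)) ^ 1 • (z - 0)⁻¹ • g z) =
      ∫ θ in (0:ℝ)..(2 * Real.pi), deriv (circleMap 0 (r:ℝ)) θ •
        (((1:ℂ) / (circleMap 0 (r:ℝ) θ - 0)) ^ 1 •
          (circleMap 0 (r:ℝ) θ - 0)⁻¹ • g (circleMap 0 (r:ℝ) θ)) from rfl]
    rw [intervalIntegral.integral_of_le Real.two_pi_pos.le]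
    refine setIntegral_congr_fun measurableSet_Ioc fun θ _ => ?_
    simp only [hFdef, hadef, hg, smul_eq_mul, pow_one, sub_zero, one_div]
    ring
  have heq : (fun y => fderiv ℂ f y u) =ᶠ[nhds p]
      fun y => (2 * Real.pi * I : ℂ)⁻¹ • ∫ θ, F y θ ∂μ := by
    filter_upwards [ball_mem_nhds p hεpos] with y hy using hrep y hy
  exact (key.differentiableAt.const_smul (2 * Real.pi * I : ℂ)⁻¹ :
    DifferentiableAt ℂ (fun y => (2 * Real.pi * I : ℂ)⁻¹ • ∫ θ, F y θ ∂μ) p).congr_of_eventuallyEq heq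

/-- `ℂⁿ` with its Euclidean (Hermitian) norm. -/
abbrev En (n : ℕ) := EuclideanSpace ℂ (Fin n)

/-- Componentwise complex conjugation on `ℂⁿ`. -/
def conjV (n : ℕ) (x : En n) : En n :=
  (WithLp.equiv 2 (Fin n → ℂ)).symm fun j => (starRingEnd ℂ) (x j)

/-- The second real Fréchet derivative `D²Φ(y)(ξ,η)`. -/
def D2R (n : ℕ) (Φ : En n → ℝ) (y ξ η : En n) : ℝ :=
  fderiv ℝ (fderiv ℝ Φ) y ξ η

/-- The Levi form `L_Φ(y)(ξ) = (1/4)(D²Φ(y)(ξ,ξ) + D²Φ(y)(iξ,iξ))`. -/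
def Levi (n : ℕ) (Φ : En n → ℝ) (y ξ : En n) : ℝ :=
  (1/4) * (D2R n Φ y ξ ξ + D2R n Φ y (Complex.I • ξ) (Complex.I • ξ))

lemma conjV_apply (n : ℕ) (x : En n) (j : Fin n) : conjV n x j = (starRingEnd ℂ) (x j) := rfl

/-- Conjugation as a real continuous linear map on `ℂⁿ`. -/
def conjL (n : ℕ) : En n →L[ℝ] En n :=
  ((LinearIsometryEquiv.piLpCongrRight 2 fun _ : Fin n =>
    Complex.conjLIE)).toLinearIsometry.toContinuousLinearMap

lemma conjL_apply (n : ℕ) (x : En n) : conjL n x = conjV n x := rfl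

lemma euclid_sum_single {n : ℕ} (x : En n) :
    ∑ k, x k • EuclideanSpace.single k (1:ℂ) = x := by
  ext j
  have : (∑ k : Fin n, x k • EuclideanSpace.single k (1:ℂ)) j
      = ∑ k : Fin n, (x k • EuclideanSpace.single k (1:ℂ)) j := by
    induction (Finset.univ : Finset (Fin n)) using Finset.induction with
    | empty => rfl
    | @insert a s h ih => rw [Finset.sum_insert h, Finset.sum_insert h, ← ih]; rfl
  rw [this]
  simp [EuclideanSpace.single_apply]

lemma conjV_smul_I (n : ℕ) (ξ : En n) :
    conjV n (Complex.I • ξ) = (-Complex.I) • conjV n ξ := by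
  ext j
  simp [conjV_apply, Complex.conj_I]

lemma clm_decomp {n : ℕ} (T : (En n × En n) →L[ℂ] ℂ) :
    T = (∑ k : Fin n, T (EuclideanSpace.single k 1, 0) •
          ((EuclideanSpace.proj k).comp (ContinuousLinearMap.fst ℂ (En n) (En n)))) +
        (∑ k : Fin n, T (0, EuclideanSpace.single k 1) •
          ((EuclideanSpace.proj k).comp (ContinuousLinearMap.snd ℂ (En n) (En n)))) := by
  refine ContinuousLinearMap.ext fun v => ?_
  obtain ⟨x, y⟩ := v
  have hx : ((x, (0:En n)) : En n × En n)
      = ∑ k : Fin n, x k • (EuclideanSpace.single k (1:ℂ), (0:En n)) := by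
    apply Prod.ext
    · rw [Prod.fst_sum]
      simpa using (euclid_sum_single x).symm
    · rw [Prod.snd_sum]
      simp
  have hy : (((0:En n), y) : En n × En n)
      = ∑ k : Fin n, y k • ((0:En n), EuclideanSpace.single k (1:ℂ)) := by
    apply Prod.ext
    · rw [Prod.fst_sum]
      simp
    · rw [Prod.snd_sum]
      simpa using (euclid_sum_single y).symm
  have h1 : T (x, y) = T (x, 0) + T (0, y) := by
    rw [← map_add]
    norm_num
  rw [ContinuousLinearMap.add_apply, ContinuousLinearMap.sum_apply,
    ContinuousLinearMap.sum_apply, h1, hx, hy, map_sum, map_sum]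
  simp only [ContinuousLinearMap.smul_apply, ContinuousLinearMap.comp_apply,
    ContinuousLinearMap.coe_fst', ContinuousLinearMap.coe_snd',
    smul_eq_mul]
  congr 1 <;> refine Finset.sum_congr rfl fun k _ => ?_
  · rw [_root_.map_smul, smul_eq_mul,
      show (EuclideanSpace.proj k) x = x k from rfl]
    ring
  · rw [_root_.map_smul, smul_eq_mul,
      show (EuclideanSpace.proj k) y = y k from rfl]
    ring


set_option maxHeartbeats 2000000

/-- for a polarization `Ψ` of `Φ`, the mixed complex Hessian of `Ψ` at
`(x₀, conj x₀)` evaluated at `((ξ,0),(0,conj ξ))` equals the Levi form `L_Φ(x₀)(ξ)`;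
consequently, if the Levi form is positive definite then the mixed Hessian
`Ψ''_{xy}(x₀, conj x₀)` is nondegenerate. -/
theorem statement5 (n : ℕ)
    (Ω : Set (En n)) (hΩ : IsOpen Ω)
    (Φ : En n → ℝ) (hΦ : ContDiffOn ℝ 2 Φ Ω)
    (x₀ : En n) (hx₀ : x₀ ∈ Ω)
    (Ψ : En n × En n → ℂ) (U : Set (En n × En n)) (hU : IsOpen U)
    (hmem : (x₀, conjV n x₀) ∈ U) (hΨ : DifferentiableOn ℂ Ψ U)
    (hpol : ∃ W : Set (En n), IsOpen W ∧ x₀ ∈ W ∧ ∀ x ∈ W, Ψ (x, conjV n x) = (Φ x : ℂ)) :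
    (∀ ξ : En n,
      fderiv ℂ (fderiv ℂ Ψ) (x₀, conjV n x₀) (ξ, 0) (0, conjV n ξ) = (Levi n Φ x₀ ξ : ℂ)) ∧
    ((∀ ξ : En n, ξ ≠ 0 → 0 < Levi n Φ x₀ ξ) →
      ∀ ξ : En n,
        (∀ η : En n, fderiv ℂ (fderiv ℂ Ψ) (x₀, conjV n x₀) (ξ, 0) (0, η) = 0) → ξ = 0) := by
  classical
  obtain ⟨W, hW, hxW, hWeq⟩ := hpol
  set p : En n × En n := (x₀, conjV n x₀) with hpdef
  -- Step 1: the complex derivative of Ψ is complex-differentiable at p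
  have hdF : DifferentiableAt ℂ (fderiv ℂ Ψ) p := by
    have h2 : (fderiv ℂ Ψ) = fun y =>
        (∑ k : Fin n, (fderiv ℂ Ψ y (EuclideanSpace.single k 1, 0)) •
          ((EuclideanSpace.proj k).comp (ContinuousLinearMap.fst ℂ (En n) (En n)))) +
        (∑ k : Fin n, (fderiv ℂ Ψ y (0, EuclideanSpace.single k 1)) •
          ((EuclideanSpace.proj k).comp (ContinuousLinearMap.snd ℂ (En n) (En n)))) :=
      funext fun y => clm_decomp _
    rw [h2]
    apply DifferentiableAt.add
    · exact DifferentiableAt.fun_sum fun k _ =>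
        (differentiableAt_fderiv_apply hU hΨ hmem _).smul_const _
    · exact DifferentiableAt.fun_sum fun k _ =>
        (differentiableAt_fderiv_apply hU hΨ hmem _).smul_const _
  set B := fderiv ℂ (fderiv ℂ Ψ) p with hBdef
  have hB : HasFDerivAt (fderiv ℂ Ψ) B p := hdF.hasFDerivAt
  have hΨdiff : ∀ y ∈ U, DifferentiableAt ℂ Ψ y := fun y hy =>
    hΨ.differentiableAt (hU.mem_nhds hy)
  have hev : ∀ᶠ y in nhds p, HasFDerivAt Ψ (fderiv ℂ Ψ y) y := by
    filter_upwards [hU.mem_nhds hmem] with y hy using (hΨdiff y hy).hasFDerivAt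
  have hsymm : ∀ v w, B v w = B w v := fun v w =>
    second_derivative_symmetric_of_eventually hev hB v w
  -- Step 2: the real second derivative of Ψ at p
  set J : En n →L[ℝ] En n × En n :=
    (ContinuousLinearMap.id ℝ (En n)).prod (conjL n) with hJdef
  have hJ : ∀ x, J x = (x, conjV n x) := fun x => by
    rw [hJdef, ContinuousLinearMap.prod_apply, conjL_apply]
    rfl
  have hJp : J x₀ = p := hJ x₀
  set RS : ((En n × En n) →L[ℂ] ℂ) →L[ℝ] ((En n × En n) →L[ℝ] ℂ) :=
    ContinuousLinearMap.restrictScalarsL ℂ (En n × En n) ℂ ℝ ℝ with hRSdef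
  have hreal1 : (fderiv ℝ Ψ) =ᶠ[nhds p] fun y => RS (fderiv ℂ Ψ y) := by
    filter_upwards [hU.mem_nhds hmem] with y hy
    exact (hΨdiff y hy).fderiv_restrictScalars ℝ
  have hreal3 : HasFDerivAt (fderiv ℝ Ψ) (RS.comp (B.restrictScalars ℝ)) p :=
    (RS.hasFDerivAt.comp p (hB.restrictScalars ℝ)).congr_of_eventuallyEq hreal1
  -- Step 3: second derivative of F := Ψ ∘ J
  set pJ : ((En n × En n) →L[ℝ] ℂ) →L[ℝ] (En n →L[ℝ] ℂ) :=
    (ContinuousLinearMap.compL ℝ (En n) (En n × En n) ℂ).flip J with hpJdef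
  have hF1 : (fderiv ℝ (fun x => Ψ (J x))) =ᶠ[nhds x₀]
      fun x => pJ (fderiv ℝ Ψ (J x)) := by
    have hopen : IsOpen (⇑J ⁻¹' U) := hU.preimage J.continuous
    have hx₀U : x₀ ∈ ⇑J ⁻¹' U := by
      show J x₀ ∈ U
      rw [hJp]; exact hmem
    filter_upwards [hopen.mem_nhds hx₀U] with x hx
    exact (((hΨdiff _ hx).restrictScalars ℝ).hasFDerivAt.comp x J.hasFDerivAt).fderiv
  have hF2 : HasFDerivAt (fun x => pJ (fderiv ℝ Ψ (J x)))
      (pJ.comp ((RS.comp (B.restrictScalars ℝ)).comp J)) x₀ := by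
    have h := (hJp ▸ hreal3 : HasFDerivAt (fderiv ℝ Ψ) (RS.comp (B.restrictScalars ℝ)) (J x₀))
    exact pJ.hasFDerivAt.comp x₀ (h.comp x₀ J.hasFDerivAt)
  have hF3 : HasFDerivAt (fderiv ℝ (fun x => Ψ (J x)))
      (pJ.comp ((RS.comp (B.restrictScalars ℝ)).comp J)) x₀ :=
    hF2.congr_of_eventuallyEq hF1
  -- Step 4: second derivative of Φ side
  set pR : (En n →L[ℝ] ℝ) →L[ℝ] (En n →L[ℝ] ℂ) :=
    ContinuousLinearMap.compL ℝ (En n) ℝ ℂ Complex.ofRealCLM with hpRdef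
  have hΦdiff : ∀ x ∈ Ω, DifferentiableAt ℝ Φ x := fun x hx =>
    (hΦ.contDiffAt (hΩ.mem_nhds hx)).differentiableAt two_ne_zero
  have hΦ1 : (fderiv ℝ (fun x => Ψ (J x))) =ᶠ[nhds x₀] fun x => pR (fderiv ℝ Φ x) := by
    have hopen : IsOpen (W ∩ Ω) := hW.inter hΩ
    filter_upwards [hopen.mem_nhds ⟨hxW, hx₀⟩] with x hx
    have he : (fun x => Ψ (J x)) =ᶠ[nhds x] fun x => (Φ x : ℂ) := by
      filter_upwards [hW.mem_nhds hx.1] with z hz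
      rw [hJ]
      exact hWeq z hz
    rw [he.fderiv_eq]
    exact (Complex.ofRealCLM.hasFDerivAt.comp x (hΦdiff x hx.2).hasFDerivAt).fderiv
  have hd2Φ : HasFDerivAt (fderiv ℝ Φ) (fderiv ℝ (fderiv ℝ Φ) x₀) x₀ := by
    have h := (hΦ.contDiffAt (hΩ.mem_nhds hx₀)).fderiv_right (m := 1) (by norm_num)
    exact (h.differentiableAt one_ne_zero).hasFDerivAt
  have hΦ3 : HasFDerivAt (fderiv ℝ (fun x => Ψ (J x)))
      (pR.comp (fderiv ℝ (fderiv ℝ Φ) x₀)) x₀ :=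
    (pR.hasFDerivAt.comp x₀ hd2Φ).congr_of_eventuallyEq hΦ1
  have huniq := hF3.unique hΦ3
  -- Step 5: the key identity
  have key : ∀ ξ η : En n, ((D2R n Φ x₀ ξ η : ℝ) : ℂ) = B (ξ, conjV n ξ) (η, conjV n η) := by
    intro ξ η
    have h1 : (pJ.comp ((RS.comp (B.restrictScalars ℝ)).comp J)) ξ η = B (J ξ) (J η) := rfl
    have h2 : (pR.comp (fderiv ℝ (fderiv ℝ Φ) x₀)) ξ η = ((D2R n Φ x₀ ξ η : ℝ) : ℂ) := rfl
    rw [← h2, ← huniq, h1, hJ, hJ]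
  -- Step 6: algebra
  have main : ∀ ξ : En n,
      B (ξ, 0) (0, conjV n ξ) = ((Levi n Φ x₀ ξ : ℝ) : ℂ) := by
    intro ξ
    set a : En n × En n := (ξ, 0) with hadef
    set b : En n × En n := ((0 : En n), conjV n ξ) with hbdef
    have hb : ((ξ, conjV n ξ) : En n × En n) = a + b := by
      rw [hadef, hbdef, Prod.mk_add_mk, add_zero, zero_add]
    have ha : ((Complex.I • ξ, conjV n (Complex.I • ξ)) : En n × En n)
        = Complex.I • a + (-Complex.I) • b := by
      rw [conjV_smul_I, hadef, hbdef, Prod.smul_mk, Prod.smul_mk, Prod.mk_add_mk,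
        smul_zero, smul_zero, add_zero, zero_add]
    have e1 := key ξ ξ
    have e2 := key (Complex.I • ξ) (Complex.I • ξ)
    rw [hb] at e1
    rw [ha] at e2
    have expand : ∀ (s t : ℂ) (v w : En n × En n),
        B (s • v + t • w) (s • v + t • w)
          = s*s*(B v v) + s*t*(B v w) + t*s*(B w v) + t*t*(B w w) := by
      intro s t v w
      rw [map_add, _root_.map_smul, _root_.map_smul]
      simp only [ContinuousLinearMap.add_apply, ContinuousLinearMap.smul_apply,
        map_add, _root_.map_smul, smul_eq_mul]
      ring
    have e1' : ((D2R n Φ x₀ ξ ξ : ℝ) : ℂ) = B a a + B a b + B b a + B b b := by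
      rw [e1, show a + b = (1:ℂ) • a + (1:ℂ) • b by simp, expand]
      ring
    have e2' : ((D2R n Φ x₀ (Complex.I • ξ) (Complex.I • ξ) : ℝ) : ℂ)
        = -(B a a) + B a b + B b a - B b b := by
      rw [e2, expand]
      linear_combination (B a a - B a b - B b a + B b b) * Complex.I_mul_I
    have hsym := hsymm a b
    have hlevi : ((Levi n Φ x₀ ξ : ℝ) : ℂ)
        = (1/4 : ℂ) * (((D2R n Φ x₀ ξ ξ : ℝ) : ℂ)
          + ((D2R n Φ x₀ (Complex.I • ξ) (Complex.I • ξ) : ℝ) : ℂ)) := by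
      rw [show Levi n Φ x₀ ξ
        = (1/4) * (D2R n Φ x₀ ξ ξ + D2R n Φ x₀ (Complex.I • ξ) (Complex.I • ξ)) from rfl]
      push_cast
      ring
    rw [hlevi, e1', e2']
    linear_combination (1/2 : ℂ) * hsym
  refine ⟨fun ξ => main ξ, ?_⟩
  intro hpos ξ hξ
  by_contra hne
  have h0 := hξ (conjV n ξ)
  rw [main ξ] at h0
  have hzero : Levi n Φ x₀ ξ = 0 := by exact_mod_cast h0
  exact absurd hzero (ne_of_gt (hpos ξ hne))

end
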